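/- If f and g are generalized palindromes in ℂ[z,z⁻¹] that are equicorrelational, then f and g are ℂ[z,z⁻¹]-associates. -/

import Mathlib

open LaurentPolynomial
open scoped Classical

/-- The length of a Laurent polynomial: 1 plus the difference between the maximal and
minimal exponents occurring with nonzero coefficient; the length of 0 is 0. -/
noncomputable def len {F : Type*} [Field F] (f : LaurentPolynomial F) : ℤ :=
  if h : f = 0 then 0
  else f.coeff.support.max' (Finsupp.support_nonempty_iff.mpr (fun h' => h (AddMonoidAlgebra.coeff_injective (h'.trans AddMonoidAlgebra.coeff_zero.symm))))
     - f.coeff.support.min' (Finsupp.support_nonempty_iff.mpr (fun h' => h (AddMonoidAlgebra.coeff_injective (h'.trans AddMonoidAlgebra.coeff_zero.symm)))) + 1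

/-- Substitution `f(z) ↦ f(z^m)`: the image of `f` under the ring homomorphism
sending `z` to `z^m`. -/
noncomputable def subst {F : Type*} [Field F] (m : ℤ) (f : LaurentPolynomial F) :
    LaurentPolynomial F :=
  AddMonoidAlgebra.mapDomainRingHom F (AddMonoidHom.mulLeft m) f

/-- The subring `F[z,z⁻¹]` of `E[z,z⁻¹]` consisting of Laurent polynomials all of whose
coefficients lie in the subfield `F` of `E`. -/
noncomputable def LRing {E : Type*} [Field E] (F : Subfield E) :
    Subring (LaurentPolynomial E) where
  carrier := {f : LaurentPolynomial E | ∀ n : ℤ, f.coeff n ∈ F}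
  zero_mem' := fun n => F.zero_mem
  one_mem' := by
    intro n
    rw [AddMonoidAlgebra.one_def, AddMonoidAlgebra.coeff_single, Finsupp.single_apply]
    split_ifs
    · exact F.one_mem
    · exact F.zero_mem
  add_mem' := by
    intro f g hf hg n
    rw [AddMonoidAlgebra.coeff_add, Finsupp.add_apply]
    exact add_mem (hf n) (hg n)
  neg_mem' := by
    intro f hf n
    rw [AddMonoidAlgebra.coeff_neg, Finsupp.neg_apply]
    exact neg_mem (hf n)
  mul_mem' := by
    intro f g hf hg n
    rw [AddMonoidAlgebra.coeff_mul]
    refine sum_mem fun a ha => sum_mem fun b hb => ?_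
    dsimp only
    split_ifs
    · exact mul_mem (hf a) (hg b)
    · exact zero_mem F

/-- The conjugate of `f(z) = Σ f_j z^j`, namely `f̄(z) = Σ conj(f_j) z^{-j}`. -/
noncomputable def lconj (f : LaurentPolynomial ℂ) : LaurentPolynomial ℂ :=
  AddMonoidAlgebra.ofCoeff
    (Finsupp.equivMapDomain (Equiv.neg ℤ) (Finsupp.mapRange (starRingEnd ℂ) (map_zero _) f.coeff))

/-- `f` and `g` are equicorrelational: `f·f̄ = c·g·ḡ` for some positive real `c`. -/
def Equicorrelational (f g : LaurentPolynomial ℂ) : Prop :=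
  ∃ c : ℝ, 0 < c ∧ f * lconj f = C (c : ℂ) * (g * lconj g)

/-- `f` and `g` are trivially equicorrelational: `g` is a `ℂ[z,z⁻¹]`-associate of `f`
or of `f̄`. -/
def TrivEquicorrelational (f g : LaurentPolynomial ℂ) : Prop :=
  Associated g f ∨ Associated g (lconj f)

/-- A generalized palindrome: `f̄` is a `ℂ[z,z⁻¹]`-associate of `f`. -/
def GenPalindrome (f : LaurentPolynomial ℂ) : Prop :=
  Associated (lconj f) f

/-- `g` is an `F[z,z⁻¹]`-associate of `f`: `g = u·f` for some unit `u` of the subring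
`F[z,z⁻¹]` of `ℂ[z,z⁻¹]`. -/
def FAssoc (F : Subfield ℂ) (g f : LaurentPolynomial ℂ) : Prop :=
  ∃ u : (LRing F)ˣ, g = ((u : LRing F) : LaurentPolynomial ℂ) * f

/-- The `F[z,z⁻¹]`-associate class of `f`. -/
def facl (F : Subfield ℂ) (f : LaurentPolynomial ℂ) : Set (LaurentPolynomial ℂ) :=
  {g | FAssoc F g f}

/-- The `F`-trivial equicorrelationality class of `f`: all elements of `F[z,z⁻¹]`
that are trivially equicorrelational to `f`. -/
def fte (F : Subfield ℂ) (f : LaurentPolynomial ℂ) : Set (LaurentPolynomial ℂ) :=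
  {g | g ∈ LRing F ∧ TrivEquicorrelational f g}

/-- A `k`-ary sequence: a Laurent polynomial whose support is a segment of consecutive
integers and whose nonzero coefficients are complex `k`-th roots of unity. -/
def IsKary (k : ℕ) (f : LaurentPolynomial ℂ) : Prop :=
  (∀ i j l : ℤ, i ≤ j → j ≤ l → f.coeff i ≠ 0 → f.coeff l ≠ 0 → f.coeff j ≠ 0) ∧
  ∀ n : ℤ, f.coeff n ≠ 0 → (f.coeff n) ^ k = 1

/-- A binary sequence: a Laurent polynomial whose support is a segment of consecutive
integers and whose nonzero coefficients all lie in `{1, -1}`. -/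
def IsBinary (f : LaurentPolynomial ℂ) : Prop :=
  (∀ i j l : ℤ, i ≤ j → j ≤ l → f.coeff i ≠ 0 → f.coeff l ≠ 0 → f.coeff j ≠ 0) ∧
  ∀ n : ℤ, f.coeff n ≠ 0 → f.coeff n = 1 ∨ f.coeff n = -1

instance : IsPrincipalIdealRing (LaurentPolynomial ℂ) := by
  haveI : IsLocalization (Submonoid.powers (Polynomial.X : Polynomial ℂ)) (LaurentPolynomial ℂ) :=
    LaurentPolynomial.isLocalization
  constructor
  intro I
  obtain ⟨p, hp⟩ := (IsPrincipalIdealRing.principal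
    (I.comap (algebraMap (Polynomial ℂ) (LaurentPolynomial ℂ))))
  refine ⟨algebraMap (Polynomial ℂ) (LaurentPolynomial ℂ) p, ?_⟩
  rw [← IsLocalization.map_comap (Submonoid.powers (Polynomial.X : Polynomial ℂ))
    (LaurentPolynomial ℂ) I, Ideal.under_def, hp]
  simp [Ideal.map_span, Ideal.submodule_span_eq]

instance : IsDomain (LaurentPolynomial ℂ) := NoZeroDivisors.to_isDomain _

lemma sq_assoc' {α : Type*} [CommMonoidWithZero α] [IsCancelMulZero α] [UniqueFactorizationMonoid α]
    {a b : α} (ha : a ≠ 0) (hb : b ≠ 0) (h : Associated (a * a) (b * b)) :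
    Associated a b := by
  rw [← Associates.mk_eq_mk_iff_associated, ← Associates.mk_mul_mk,
    ← Associates.mk_mul_mk] at h
  rw [← Associates.mk_eq_mk_iff_associated]
  have ha' : Associates.mk a ≠ 0 := Associates.mk_ne_zero.2 ha
  have hb' : Associates.mk b ≠ 0 := Associates.mk_ne_zero.2 hb
  refine Associates.eq_of_eq_counts ha' hb' fun p hp => ?_
  have h1 := Associates.count_mul ha' ha' hp
  have h2 := Associates.count_mul hb' hb' hp
  rw [h] at h1
  omega

theorem stmt13 (f g : LaurentPolynomial ℂ) (hf : GenPalindrome f)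
    (hg : GenPalindrome g) (h : Equicorrelational f g) :
    Associated f g := by
  obtain ⟨c, hc, hcf⟩ := h
  have hCc : IsUnit (C (c : ℂ)) := by
    refine IsUnit.of_mul_eq_one (C (c : ℂ)⁻¹) ?_
    rw [← map_mul, mul_inv_cancel₀ (by exact_mod_cast hc.ne'), map_one]
  have hconj : ∀ h : LaurentPolynomial ℂ, GenPalindrome h → lconj h = 0 → h = 0 := by
    intro h hh h0
    obtain ⟨u, hu⟩ := hh
    rw [h0, zero_mul] at hu
    exact hu.symm
  by_cases hf0 : f = 0
  · have : (0 : LaurentPolynomial ℂ) = C (c : ℂ) * (g * lconj g) := by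
      rw [← hcf, hf0, zero_mul]
    have hg0 : g * lconj g = 0 := by
      rcases mul_eq_zero.1 this.symm with h1 | h1
      · exact absurd h1 (hCc.ne_zero)
      · exact h1
    rcases mul_eq_zero.1 hg0 with h1 | h1
    · rw [hf0, h1]
    · rw [hf0, hconj g hg h1]
  · have hg0 : g ≠ 0 := by
      intro hg0
      apply hf0
      rw [hg0] at hcf
      have hl0 : lconj (0 : LaurentPolynomial ℂ) = 0 := by
        simp [lconj, AddMonoidAlgebra.coeff_zero]
      rw [hl0, mul_zero, mul_zero] at hcf
      rcases mul_eq_zero.1 hcf with h1 | h1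
      · exact h1
      · exact hconj f hf h1
    obtain ⟨u, hu⟩ := hf
    obtain ⟨v, hv⟩ := hg
    have h1 : Associated (f * lconj f) (f * f) := Associated.mul_left f ⟨u, hu⟩
    have h2 : Associated (g * lconj g) (g * g) := Associated.mul_left g ⟨v, hv⟩
    have h3 : Associated (g * lconj g) (f * lconj f) := by
      refine ⟨hCc.unit, ?_⟩
      rw [IsUnit.unit_spec, mul_comm, ← hcf]
    exact sq_assoc' hf0 hg0 (h1.symm.trans (h3.symm.trans h2))
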